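/- The set 𝒲 = ⋃_{k ≥ 3} 𝒱^(k) is a cross-fix-free code: every element of 𝒲 is bifix-free, and for any two distinct v, v' ∈ 𝒲, no nonempty prefix of v (including v itself) equals a suffix of v', and no nonempty prefix of v' equals a suffix of v. -/

import Mathlib

/-!
Binary strings are modeled as `List Bool`, with `true` = 1 and `false` = 0.
-/

/-- A string `v` is bifix-free if no nonempty proper prefix of `v` equals a
(proper) suffix of `v`. -/
def BifixFree (v : List Bool) : Prop :=
  ∀ p : List Bool, p ≠ [] → p ≠ v → p <+: v → ¬ p <:+ v

/-- The set `V_n^(k)`: binary strings of length `n` starting with `k` ones,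
ending with `k` zeros, whose middle factor `v_{k+1} … v_{n-k}` begins with 0,
ends with 1, and contains neither `k` consecutive 0's nor `k` consecutive 1's. -/
def Vnk (n k : ℕ) : Set (List Bool) :=
  {v | v.length = n ∧
    List.replicate k true <+: v ∧
    List.replicate k false <:+ v ∧
    ((v.drop k).take (n - 2 * k)).head? = some false ∧
    ((v.drop k).take (n - 2 * k)).getLast? = some true ∧
    ¬ List.replicate k false <:+: ((v.drop k).take (n - 2 * k)) ∧
    ¬ List.replicate k true <:+: ((v.drop k).take (n - 2 * k))}

/-- `𝒱^(k) = ⋃_{i ≥ 2k+2} V_i^(k)`. -/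
def VkSet (k : ℕ) : Set (List Bool) := ⋃ i ∈ {i : ℕ | 2 * k + 2 ≤ i}, Vnk i k

/-- `𝒱^(k)(n)`: elements of `𝒱^(k)` of length at most `n`. -/
def VkLe (k n : ℕ) : Set (List Bool) := {v ∈ VkSet k | v.length ≤ n}

/-- The set of binary strings of length `ℓ` that begin with 0, end with 1, and
contain neither `k` consecutive 0's nor `k` consecutive 1's. -/
def Rset (k ℓ : ℕ) : Set (List Bool) :=
  {w | w.length = ℓ ∧ w.head? = some false ∧ w.getLast? = some true ∧
    ¬ List.replicate k false <:+: w ∧ ¬ List.replicate k true <:+: w}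

/-- `r_ℓ^(k)`, with the convention `r_0^(k) = 1`. -/
noncomputable def r (k ℓ : ℕ) : ℕ := if ℓ = 0 then 1 else (Rset k ℓ).ncard

/-- Shifted `k`-generalized Fibonacci numbers: `f_ℓ^(k) = 2^ℓ` for `ℓ ≤ k-1`, and
`f_ℓ^(k) = ∑_{i=1}^{k} f_{ℓ-i}^(k)` for `ℓ ≥ k`. -/
def f (k : ℕ) : ℕ → ℕ
  | ℓ =>
    if h : ℓ < k then 2 ^ ℓ
    else ∑ i ∈ (Finset.range k).attach, f k (ℓ - (i.1 + 1))
termination_by ℓ => ℓ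
decreasing_by
  have hi := i.2
  simp only [Finset.mem_range] at hi
  omega

/-- `S^(k)(n) = ∑_{ℓ=0}^{n} f_ℓ^(k)`. -/
def S (k n : ℕ) : ℕ := ∑ ℓ ∈ Finset.range (n + 1), f k ℓ

/-- `d_ℓ^(k)`: 1 if `ℓ ≡ 0 (mod k)`, -1 if `ℓ ≡ 1 (mod k)`, 0 otherwise. -/
def d (k ℓ : ℕ) : ℤ := if ℓ % k = 0 then 1 else if ℓ % k = 1 then -1 else 0

/-- A set of binary strings is a cross-fix-free code if every element is
bifix-free and, for any two distinct elements `v, v'`, no nonempty prefix of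
`v` (including `v` itself) is a suffix of `v'`, and vice versa. -/
def CrossFixFree (X : Set (List Bool)) : Prop :=
  (∀ v ∈ X, BifixFree v) ∧
  ∀ v ∈ X, ∀ v' ∈ X, v ≠ v' → ∀ p : List Bool, p ≠ [] → p <+: v → ¬ p <:+ v'

/-- A strong cross-fix-free code: cross-fix-free and no codeword is a factor of
another. -/
def StrongCrossFixFree (X : Set (List Bool)) : Prop :=
  CrossFixFree X ∧ ∀ v ∈ X, ∀ v' ∈ X, v ≠ v' → ¬ v <:+: v'

/-- A Dyck word: equal numbers of 1's and 0's, and every prefix has at least as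
many 1's as 0's. -/
def IsDyck (w : List Bool) : Prop :=
  w.count true = w.count false ∧ ∀ p : List Bool, p <+: w → p.count false ≤ p.count true

/-- `𝒟 = { 1α0 : α a Dyck word }`. -/
def Dset : Set (List Bool) := {v | ∃ α : List Bool, IsDyck α ∧ v = true :: (α ++ [false])}

/-- `𝒟(n)`: elements of `𝒟` of length at most `n`. -/
def DLe (n : ℕ) : Set (List Bool) := {v ∈ Dset | v.length ≤ n}


private lemma lt_of_getElem?_some {l : List Bool} {i : ℕ} {a : Bool}
    (h : l[i]? = some a) : i < l.length := by
  by_contra hc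
  rw [List.getElem?_eq_none (by omega)] at h
  cases h

private lemma rep_prefix {b : Bool} {a c : ℕ} (h : a ≤ c) :
    List.replicate a b <+: List.replicate c b :=
  ⟨List.replicate (c - a) b, by rw [← List.replicate_add]; congr 1; omega⟩

private lemma infix_of_run {w : List Bool} {b : Bool} {i k : ℕ} (hk : 0 < k)
    (h : ∀ l, l < k → w[i + l]? = some b) : List.replicate k b <:+: w := by
  have hlast := h (k - 1) (by omega)
  have hlen : i + k ≤ w.length := by
    have := lt_of_getElem?_some hlast
    omega
  have hseg : (w.drop i).take k = List.replicate k b := by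
    apply List.ext_getElem?
    intro x
    rw [List.getElem?_take, List.getElem?_drop, List.getElem?_replicate]
    by_cases hx : x < k
    · rw [if_pos hx, if_pos hx]; exact h x hx
    · rw [if_neg hx, if_neg hx]
  refine ⟨w.take i, (w.drop i).drop k, ?_⟩
  rw [← hseg, List.append_assoc, List.take_append_drop, List.take_append_drop]

section Chars

variable {k : ℕ} {m v : List Bool}

private lemma char_len (hv : v = (List.replicate k true ++ m) ++ List.replicate k false) :
    v.length = 2 * k + m.length := by
  rw [hv]
  simp only [List.length_append, List.length_replicate]
  omega

private lemma char_true (hv : v = (List.replicate k true ++ m) ++ List.replicate k false)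
    {i : ℕ} (hi : i < k) : v[i]? = some true := by
  subst hv
  rw [List.getElem?_append_left (by simp only [List.length_append, List.length_replicate]; omega),
     List.getElem?_append_left (by simp only [List.length_replicate]; omega),
     List.getElem?_replicate, if_pos hi]

private lemma char_mid (hv : v = (List.replicate k true ++ m) ++ List.replicate k false)
    {x : ℕ} (hx : x < m.length) : v[k + x]? = m[x]? := by
  subst hv
  rw [List.getElem?_append_left (by simp only [List.length_append, List.length_replicate]; omega),
     List.getElem?_append_right (by simp only [List.length_replicate]; omega),
     List.length_replicate]
  congr 1
  omega

private lemma char_false (hv : v = (List.replicate k true ++ m) ++ List.replicate k false)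
    {i : ℕ} (h1 : k + m.length ≤ i) (h2 : i < 2 * k + m.length) : v[i]? = some false := by
  subst hv
  rw [List.getElem?_append_right (by simp only [List.length_append, List.length_replicate]; omega),
     List.getElem?_replicate,
     if_pos (by simp only [List.length_append, List.length_replicate]; omega)]

private lemma char_k (hv : v = (List.replicate k true ++ m) ++ List.replicate k false)
    (hm : 0 < m.length) (hh : m.head? = some false) : v[k]? = some false := by
  have h := char_mid hv (x := 0) hm
  rw [Nat.add_zero] at h
  rw [h, ← List.head?_eq_getElem?]
  exact hh

private lemma char_last (hv : v = (List.replicate k true ++ m) ++ List.replicate k false)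
    (hm : 0 < m.length) (hl : m.getLast? = some true) :
    v[k + m.length - 1]? = some true := by
  have h := char_mid hv (x := m.length - 1) (by omega)
  rw [show k + (m.length - 1) = k + m.length - 1 from by omega] at h
  rw [h, ← show m.length - 1 = m.length - 1 from rfl, ← List.getLast?_eq_getElem?]
  exact hl

end Chars

private lemma lemA {k k' j : ℕ} {m' v' : List Bool}
    (hv' : v' = (List.replicate k' true ++ m') ++ List.replicate k' false)
    (hk : 0 < k) (hm : 0 < m'.length) (hh : m'.head? = some false)
    (hnt : ¬ List.replicate k' true <:+: m')
    (hrun : ∀ l, l < k → v'[j + l]? = some true)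
    (hafter : v'[j + k]? = some false) :
    j + k = k' ∨ k < k' := by
  have hn' := char_len hv'
  have hub : j + k ≤ k' + m'.length := by
    by_contra hc
    have h1 := hrun (k - 1) (by omega)
    have h2 : j + (k - 1) < v'.length := lt_of_getElem?_some h1
    have h3 := char_false hv' (i := j + (k - 1)) (by omega) (by omega)
    rw [h3] at h1
    simp at h1
  by_cases hj : j < k'
  · left
    have hjk : j + k ≤ k' := by
      by_contra hc
      have h1 := hrun (k' - j) (by omega)
      rw [show j + (k' - j) = k' from by omega] at h1
      rw [char_k hv' hm hh] at h1
      simp at h1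
    rcases Nat.lt_or_ge (j + k) k' with h | h
    · exfalso
      rw [char_true hv' h] at hafter
      simp at hafter
    · omega
  · right
    push_neg at hj
    have hrunm : ∀ l, l < k → m'[(j - k') + l]? = some true := by
      intro l hl
      have h1 := hrun l hl
      have h2 := char_mid hv' (x := (j - k') + l) (by omega)
      rw [show k' + ((j - k') + l) = j + l from by omega] at h2
      rw [h2] at h1
      exact h1
    have hinf : List.replicate k true <:+: m' := infix_of_run hk hrunm
    by_contra hcon
    push_neg at hcon
    exact hnt ((rep_prefix hcon).isInfix.trans hinf)

private lemma lemB {k k' i : ℕ} {m v : List Bool}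
    (hv : v = (List.replicate k true ++ m) ++ List.replicate k false)
    (hk' : 0 < k') (hm : 0 < m.length) (hl : m.getLast? = some true)
    (hnf : ¬ List.replicate k false <:+: m)
    (hrun : ∀ l, l < k' → v[i + l]? = some false)
    (hi1 : 1 ≤ i) (hbef : v[i - 1]? = some true) :
    (i = k + m.length ∧ k' ≤ k) ∨ k' < k := by
  have hn := char_len hv
  have hik : k ≤ i := by
    by_contra hc
    have h1 := hrun 0 hk'
    rw [Nat.add_zero, char_true hv (by omega)] at h1
    simp at h1
  have hub : i + k' ≤ 2 * k + m.length := by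
    have h1 := hrun (k' - 1) (by omega)
    have h2 : i + (k' - 1) < v.length := lt_of_getElem?_some h1
    omega
  by_cases him : i + k' ≤ k + m.length
  · right
    have hrunm : ∀ l, l < k' → m[(i - k) + l]? = some false := by
      intro l hl
      have h1 := hrun l hl
      have h2 := char_mid hv (x := (i - k) + l) (by omega)
      rw [show k + ((i - k) + l) = i + l from by omega] at h2
      rw [h2] at h1
      exact h1
    have hinf : List.replicate k' false <:+: m := infix_of_run hk' hrunm
    by_contra hcon
    push_neg at hcon
    exact hnf ((rep_prefix hcon).isInfix.trans hinf)
  · left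
    push_neg at him
    have h1 : k + m.length ≤ i := by
      by_contra hc
      push_neg at hc
      have ha := hrun (k + m.length - 1 - i) (by omega)
      rw [show i + (k + m.length - 1 - i) = k + m.length - 1 from by omega] at ha
      rw [char_last hv hm hl] at ha
      simp at ha
    have h2 : i ≤ k + m.length := by
      by_contra hc
      push_neg at hc
      have hb := char_false hv (i := i - 1) (by omega) (by omega)
      rw [hb] at hbef
      simp at hbef
    exact ⟨by omega, by omega⟩

private lemma main_key {k k' : ℕ} {m m' p v v' : List Bool}
    (hk : 3 ≤ k) (hk' : 3 ≤ k')
    (hv : v = (List.replicate k true ++ m) ++ List.replicate k false)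
    (hv' : v' = (List.replicate k' true ++ m') ++ List.replicate k' false)
    (hm2 : 2 ≤ m.length) (hmh : m.head? = some false) (hml : m.getLast? = some true)
    (hmf : ¬ List.replicate k false <:+: m) (hmt : ¬ List.replicate k true <:+: m)
    (hm2' : 2 ≤ m'.length) (hmh' : m'.head? = some false) (hml' : m'.getLast? = some true)
    (hmf' : ¬ List.replicate k' false <:+: m') (hmt' : ¬ List.replicate k' true <:+: m')
    (hp : p ≠ []) (hpre : p <+: v) (hsuf : p <:+ v') : p = v ∧ v = v' := by
  obtain ⟨s, hs⟩ := hpre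
  obtain ⟨t, ht⟩ := hsuf
  have hn := char_len hv
  have hn' := char_len hv'
  have hLn : p.length + s.length = v.length := by
    have := congrArg List.length hs
    rwa [List.length_append] at this
  have hLn' : t.length + p.length = v'.length := by
    have := congrArg List.length ht
    rwa [List.length_append] at this
  have hp1 : 1 ≤ p.length := List.length_pos_iff.mpr hp
  have pv : ∀ i, i < p.length → v[i]? = p[i]? := by
    intro i hi
    rw [← hs, List.getElem?_append_left hi]
  have pv' : ∀ i, i < p.length → v'[t.length + i]? = p[i]? := by
    intro i hi
    rw [← ht, List.getElem?_append_right (by omega)]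
    congr 1
    omega
  have hkL : k < p.length := by
    by_contra hc
    push_neg at hc
    have e1 := char_true hv (i := p.length - 1) (by omega)
    rw [pv (p.length - 1) (by omega)] at e1
    have e4 := char_false hv' (i := t.length + (p.length - 1)) (by omega) (by omega)
    rw [pv' (p.length - 1) (by omega), e1] at e4
    simp at e4
  have hk'L : k' < p.length := by
    by_contra hc
    push_neg at hc
    have e1 := char_true hv (i := 0) (by omega)
    rw [pv 0 (by omega)] at e1
    have e4 := char_false hv' (i := t.length + 0) (by omega) (by omega)
    rw [pv' 0 (by omega), e1] at e4
    simp at e4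
  have hA : t.length + k = k' ∨ k < k' := by
    refine lemA hv' (by omega) (by omega) hmh' hmt' ?_ ?_
    · intro l hl
      rw [pv' l (by omega), ← pv l (by omega)]
      exact char_true hv (by omega)
    · rw [pv' k (by omega), ← pv k (by omega)]
      exact char_k hv (by omega) hmh
  have hB : (p.length - k' = k + m.length ∧ k' ≤ k) ∨ k' < k := by
    refine lemB hv (by omega) (by omega) hml hmf ?_ (by omega) ?_
    · intro l hl
      rw [pv (p.length - k' + l) (by omega), ← pv' (p.length - k' + l) (by omega)]
      exact char_false hv' (by omega) (by omega)
    · rw [pv (p.length - k' - 1) (by omega), ← pv' (p.length - k' - 1) (by omega)]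
      rw [show t.length + (p.length - k' - 1) = k' + m'.length - 1 from by omega]
      exact char_last hv' (by omega) hml'
  rcases hA with hA | hA
  · rcases hB with hB | hB
    · have hkk : k = k' := by omega
      have htnil : t = [] := by
        apply List.length_eq_zero_iff.mp
        omega
      have hsnil : s = [] := by
        apply List.length_eq_zero_iff.mp
        omega
      rw [htnil, List.nil_append] at ht
      rw [hsnil, List.append_nil] at hs
      exact ⟨hs, hs.symm.trans ht⟩
    · exfalso; omega
  · rcases hB with hB | hB
    · exfalso; omega
    · exfalso; omega

private lemma struct {k : ℕ} {v : List Bool} (hk : 3 ≤ k) (hv : v ∈ VkSet k) :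
    ∃ m : List Bool, v = (List.replicate k true ++ m) ++ List.replicate k false ∧
      2 ≤ m.length ∧ m.head? = some false ∧ m.getLast? = some true ∧
      ¬ List.replicate k false <:+: m ∧ ¬ List.replicate k true <:+: m := by
  simp only [VkSet, Set.mem_iUnion, Set.mem_setOf_eq] at hv
  obtain ⟨n, hn, hv⟩ := hv
  simp only [Vnk, Set.mem_setOf_eq] at hv
  obtain ⟨hlen, hpre, hsuf, hh, hl, hnf, hnt⟩ := hv
  obtain ⟨s, hs⟩ := hpre
  have hds : v.drop k = s := by
    rw [← hs]
    have : (List.replicate k true ++ s).drop (List.replicate k true).length = s := List.drop_left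
    rwa [List.length_replicate] at this
  have hsl : s.length = n - k := by
    have h1 := congrArg List.length hs
    rw [List.length_append, List.length_replicate] at h1
    omega
  have hdrop : s.drop (n - 2 * k) = List.replicate k false := by
    have h1 : s.drop (n - 2 * k) <:+ v :=
      (List.drop_suffix _ _).trans ⟨List.replicate k true, hs⟩
    have h2 : (s.drop (n - 2 * k)).length = k := by
      rw [List.length_drop]
      omega
    obtain ⟨x, hx⟩ := h1
    obtain ⟨y, hy⟩ := hsuf
    have hxy : x.length = y.length := by
      have e1 := congrArg List.length hx
      have e2 := congrArg List.length hy
      rw [List.length_append] at e1 e2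
      rw [List.length_replicate] at e2
      omega
    exact List.append_inj_right (hx.trans hy.symm) hxy
  rw [hds] at hh hl hnf hnt
  refine ⟨s.take (n - 2 * k), ?_, ?_, hh, hl, hnf, hnt⟩
  · rw [← hdrop, ← hs, List.append_assoc, List.take_append_drop]
  · rw [List.length_take]
    omega

/-- `𝒲 = ⋃_{k ≥ 3} 𝒱^(k)` is a cross-fix-free code. -/
theorem stmt_12 : CrossFixFree (⋃ k ∈ {k : ℕ | 3 ≤ k}, VkSet k) := by
  have H : ∀ v ∈ (⋃ k ∈ {k : ℕ | 3 ≤ k}, VkSet k),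
      ∀ v' ∈ (⋃ k ∈ {k : ℕ | 3 ≤ k}, VkSet k),
      ∀ p : List Bool, p ≠ [] → p <+: v → p <:+ v' → p = v ∧ v = v' := by
    intro v hv v' hv' p hp hpre hsuf
    simp only [Set.mem_iUnion, Set.mem_setOf_eq] at hv hv'
    obtain ⟨k, hk, hvk⟩ := hv
    obtain ⟨k', hk', hvk'⟩ := hv'
    obtain ⟨m, hm, hm2, hmh, hml, hmf, hmt⟩ := struct hk hvk
    obtain ⟨m', hm', hm2', hmh', hml', hmf', hmt'⟩ := struct hk' hvk'
    exact main_key hk hk' hm hm' hm2 hmh hml hmf hmt hm2' hmh' hml' hmf' hmt' hp hpre hsuf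
  constructor
  · intro v hv p hp hpv hpre hsuf
    exact hpv (H v hv v hv p hp hpre hsuf).1
  · intro v hv v' hv' hne p hp hpre hsuf
    exact hne (H v hv v' hv' p hp hpre hsuf).2
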